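/- Let G be a finite abelian group with a nondegenerate Hermitian bicharacter χ. Then either |G| = |H|² for some subgroup H with H = H', or |G| = 2·|K|² where K is a subgroup of the index-2 subgroup G⁺ = {g : χ(g,g)=1} satisfying K = K' inside G⁺; in particular |G| is either a perfect square or twice a perfect square. -/

import Mathlib

/-- The annihilator of a set `S ⊆ G` with respect to a bicharacter `χ`. -/
def annihilator {G : Type*} [CommGroup G] (χ : G → G → ℂˣ) (S : Set G) : Set G :=
  {g : G | ∀ h ∈ S, χ h g = 1}

namespace CardSquareAux

lemma card_hom_eq (K : Type*) [CommGroup K] [Finite K] : Nat.card (K →* ℂˣ) = Nat.card K := by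
  haveI : NeZero ((Monoid.exponent K : ℂ)) := ⟨by exact_mod_cast Monoid.exponent_ne_zero_of_finite⟩
  obtain ⟨e⟩ := CommGroup.monoidHom_mulEquiv_of_hasEnoughRootsOfUnity K ℂ
  exact Nat.card_congr e.toEquiv

variable {G : Type*} [CommGroup G] [Fintype G] (χ : G → G → ℂˣ)

/-- `χ g ·` as a monoid hom. -/
def rhom (hmul₂ : ∀ g h₁ h₂ : G, χ g (h₁ * h₂) = χ g h₁ * χ g h₂) (g : G) : G →* ℂˣ := MonoidHom.mk' (fun h => χ g h) (hmul₂ g)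

/-- `χ · h` as a monoid hom. -/
def lhom (hmul₁ : ∀ g₁ g₂ h : G, χ (g₁ * g₂) h = χ g₁ h * χ g₂ h) (h : G) : G →* ℂˣ := MonoidHom.mk' (fun g => χ g h) (fun a b => hmul₁ a b h)

lemma rzpow (hmul₂ : ∀ g h₁ h₂ : G, χ g (h₁ * h₂) = χ g h₁ * χ g h₂) (g a : G) (n : ℤ) :
    χ g (a ^ n) = χ g a ^ n := map_zpow (rhom χ hmul₂ g) a n

lemma lzpow (hmul₁ : ∀ g₁ g₂ h : G, χ (g₁ * g₂) h = χ g₁ h * χ g₂ h) (a h : G) (n : ℤ) :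
    χ (a ^ n) h = χ a h ^ n := map_zpow (lhom χ hmul₁ h) a n

lemma norm_one (hmul₂ : ∀ g h₁ h₂ : G, χ g (h₁ * h₂) = χ g h₁ * χ g h₂) (g h : G) : ‖(χ g h : ℂ)‖ = 1 := by
  have h1 : (χ g h) ^ Fintype.card G = 1 := by
    have h2 := map_pow (rhom χ hmul₂ g) h (Fintype.card G)
    rw [pow_card_eq_one, map_one] at h2
    exact h2.symm
  refine Complex.norm_eq_one_of_pow_eq_one (n := Fintype.card G) ?_ Fintype.card_ne_zero
  rw [← Units.val_pow_eq_pow_val, h1, Units.val_one]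

lemma skew (hmul₂ : ∀ g h₁ h₂ : G, χ g (h₁ * h₂) = χ g h₁ * χ g h₂) (hherm : ∀ g h : G, (χ g h : ℂ) = (starRingEnd ℂ) ((χ h g : ℂ))) (g h : G) : χ g h = (χ h g)⁻¹ := by
  ext
  rw [Units.val_inv_eq_inv_val, Complex.inv_eq_conj (norm_one χ hmul₂ h g), hherm]

lemma skew_mul (hmul₂ : ∀ g h₁ h₂ : G, χ g (h₁ * h₂) = χ g h₁ * χ g h₂) (hherm : ∀ g h : G, (χ g h : ℂ) = (starRingEnd ℂ) ((χ h g : ℂ))) (g h : G) : χ g h * χ h g = 1 := by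
  rw [skew χ hmul₂ hherm g h, inv_mul_cancel]

lemma diag_sq (hmul₂ : ∀ g h₁ h₂ : G, χ g (h₁ * h₂) = χ g h₁ * χ g h₂) (hherm : ∀ g h : G, (χ g h : ℂ) = (starRingEnd ℂ) ((χ h g : ℂ))) (g : G) : χ g g ^ 2 = 1 := by
  have := skew_mul χ hmul₂ hherm g g
  rwa [← sq] at this

lemma diag_cases (hmul₂ : ∀ g h₁ h₂ : G, χ g (h₁ * h₂) = χ g h₁ * χ g h₂) (hherm : ∀ g h : G, (χ g h : ℂ) = (starRingEnd ℂ) ((χ h g : ℂ))) (g : G) : (χ g g : ℂ) = 1 ∨ (χ g g : ℂ) = -1 := by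
  have h1 : (χ g g : ℂ) ^ 2 = 1 := by
    rw [← Units.val_pow_eq_pow_val, diag_sq χ hmul₂ hherm g, Units.val_one]
  have h2 : ((χ g g : ℂ) - 1) * ((χ g g : ℂ) + 1) = 0 := by linear_combination h1
  rcases mul_eq_zero.mp h2 with h | h
  · exact Or.inl (by linear_combination h)
  · exact Or.inr (by linear_combination h)

/-- The annihilator of a subgroup is a subgroup. -/
def annSub (hmul₂ : ∀ g h₁ h₂ : G, χ g (h₁ * h₂) = χ g h₁ * χ g h₂) (H : Subgroup G) : Subgroup G where
  carrier := annihilator χ (H : Set G)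
  one_mem' := fun h _ => by
    have := map_one (rhom χ hmul₂ h)
    exact this
  mul_mem' := by
    intro a b ha hb h hh
    rw [hmul₂, ha h hh, hb h hh, mul_one]
  inv_mem' := by
    intro a ha h hh
    have := map_inv (rhom χ hmul₂ a) -- not needed
    have h1 : χ h a⁻¹ = (χ h a)⁻¹ := map_inv (rhom χ hmul₂ h) a
    rw [h1, ha h hh, inv_one]

/-- The key counting fact: `|ann H| * |H| = |G|`. -/
lemma card_ann_mul_card (hmul₁ : ∀ g₁ g₂ h : G, χ (g₁ * g₂) h = χ g₁ h * χ g₂ h) (hmul₂ : ∀ g h₁ h₂ : G, χ g (h₁ * h₂) = χ g h₁ * χ g h₂) (hherm : ∀ g h : G, (χ g h : ℂ) = (starRingEnd ℂ) ((χ h g : ℂ))) (hnd : ∀ g : G, (∀ h : G, χ g h = 1) → g = 1) (H : Subgroup G) :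
    Nat.card (annSub χ hmul₂ H) * Nat.card H = Nat.card G := by
  classical
  haveI : Finite (G →* ℂˣ) := by
    haveI : NeZero ((Monoid.exponent G : ℂ)) :=
      ⟨by exact_mod_cast Monoid.exponent_ne_zero_of_finite⟩
    obtain ⟨e⟩ := CommGroup.monoidHom_mulEquiv_of_hasEnoughRootsOfUnity G ℂ
    exact Finite.of_equiv G e.toEquiv.symm
  -- the pairing map ψ : G →* (G →* ℂˣ)
  let ψ : G →* (G →* ℂˣ) :=
    MonoidHom.mk' (fun a => MonoidHom.mk' (fun g => χ g a) (fun x y => hmul₁ x y a))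
      (fun a b => MonoidHom.ext fun g => hmul₂ g a b)
  have hψinj : Function.Injective ψ := by
    refine (injective_iff_map_eq_one ψ).mpr fun a ha => ?_
    refine hnd a fun h => ?_
    have h1 : χ h a = 1 := DFunLike.congr_fun ha h
    rw [skew χ hmul₂ hherm a h, h1, inv_one]
  have hψbij : Function.Bijective ψ :=
    (Nat.bijective_iff_injective_and_card ψ).mpr ⟨hψinj, (card_hom_eq G).symm⟩
  -- the bijection between the annihilator and characters of G ⧸ H
  have hker : ∀ a : annSub χ hmul₂ H, ∀ h ∈ H, ψ (a : G) h = 1 := fun a h hh => a.2 h hh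
  let Φ : annSub χ hmul₂ H → (G ⧸ H →* ℂˣ) := fun a =>
    QuotientGroup.lift H (ψ (a : G)) (fun h hh => hker a h hh)
  have hΦbij : Function.Bijective Φ := by
    constructor
    · intro a b hab
      have h1 : ψ (a : G) = ψ (b : G) := MonoidHom.ext fun g => by
        have := DFunLike.congr_fun hab (QuotientGroup.mk g)
        exact this
      exact Subtype.ext (hψinj h1)
    · intro f
      obtain ⟨a, ha⟩ := hψbij.2 (f.comp (QuotientGroup.mk' H))
      have haA : a ∈ annSub χ hmul₂ H := by
        intro h hh
        have h1 : ψ a h = f (QuotientGroup.mk h) := by rw [ha]; rfl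
        have h2 : (QuotientGroup.mk h : G ⧸ H) = 1 := (QuotientGroup.eq_one_iff h).mpr hh
        rw [h2, map_one] at h1
        exact h1
      refine ⟨⟨a, haA⟩, ?_⟩
      refine QuotientGroup.monoidHom_ext H (MonoidHom.ext fun g => ?_)
      have hfa : ψ a g = f (QuotientGroup.mk g) := by rw [ha]; rfl
      exact hfa
  have h1 : Nat.card (annSub χ hmul₂ H) = Nat.card (G ⧸ H →* ℂˣ) := Nat.card_eq_of_bijective Φ hΦbij
  have h2 : Nat.card (G ⧸ H →* ℂˣ) = Nat.card (G ⧸ H) := card_hom_eq _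
  have h3 : Nat.card G = Nat.card (G ⧸ H) * Nat.card H :=
    Subgroup.card_eq_card_quotient_mul_card_subgroup H
  rw [h1, h2, h3]

end CardSquareAux

open CardSquareAux
theorem card_square_or_twice_square
    (G : Type*) [CommGroup G] [Fintype G] (χ : G → G → ℂˣ)
    (hmul₁ : ∀ g₁ g₂ h : G, χ (g₁ * g₂) h = χ g₁ h * χ g₂ h)
    (hmul₂ : ∀ g h₁ h₂ : G, χ g (h₁ * h₂) = χ g h₁ * χ g h₂)
    (hnd : ∀ g : G, (∀ h : G, χ g h = 1) → g = 1)
    (hherm : ∀ g h : G, (χ g h : ℂ) = (starRingEnd ℂ) ((χ h g : ℂ))) :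
    ((∃ H : Subgroup G, (H : Set G) = annihilator χ (H : Set G) ∧
        Nat.card G = Nat.card H ^ 2) ∨
      (∃ K : Subgroup G, (K : Set G) ⊆ {g : G | (χ g g : ℂ) = 1} ∧
        (K : Set G) = annihilator χ (K : Set G) ∩ {g : G | (χ g g : ℂ) = 1} ∧
        Nat.card G = 2 * Nat.card K ^ 2)) ∧
    (∃ m : ℕ, Nat.card G = m ^ 2 ∨ Nat.card G = 2 * m ^ 2) := by
  classical
  -- maximal isotropic subgroup
  set S : Set (Subgroup G) := {H | ∀ a ∈ H, ∀ b ∈ H, χ a b = 1} with hS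
  have hSne : S.Nonempty := by
    refine ⟨⊥, fun a ha b hb => ?_⟩
    rw [Subgroup.mem_bot] at ha hb
    subst ha; subst hb
    exact map_one (rhom χ hmul₂ 1)
  obtain ⟨H, hHiso, hHmax⟩ :=
    Set.Finite.exists_maximalFor (fun H : Subgroup G => Nat.card H) S (Set.toFinite S) hSne
  -- the maximality property in usable form
  have hmax : ∀ a : G, (∀ h ∈ H, χ h a = 1) → χ a a = 1 → a ∈ H := by
    intro a hann haa
    have hann' : ∀ h ∈ H, χ a h = 1 := fun h hh => by
      rw [skew χ hmul₂ hherm a h, hann h hh, inv_one]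
    set H' : Subgroup G := H ⊔ Subgroup.zpowers a with hH'
    have hiso' : H' ∈ S := by
      intro x hx y hy
      obtain ⟨hx1, hhx1, zx, hzx, hxeq⟩ := Subgroup.mem_sup.mp hx
      obtain ⟨hy1, hhy1, zy, hzy, hyeq⟩ := Subgroup.mem_sup.mp hy
      obtain ⟨m, hm⟩ := Subgroup.mem_zpowers_iff.mp hzx
      obtain ⟨n, hn⟩ := Subgroup.mem_zpowers_iff.mp hzy
      subst hxeq hyeq hm hn
      rw [hmul₁, hmul₂ hx1, hmul₂ (a ^ m)]
      have e1 : χ hx1 hy1 = 1 := hHiso hx1 hhx1 hy1 hhy1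
      have e2 : χ hx1 (a ^ n) = 1 := by
        rw [rzpow χ hmul₂ hx1 a n, hann hx1 hhx1, one_zpow]
      have e3 : χ (a ^ m) hy1 = 1 := by
        rw [lzpow χ hmul₁ a hy1 m]
        have : χ a hy1 = 1 := hann' hy1 hhy1
        rw [this, one_zpow]
      have e4 : χ (a ^ m) (a ^ n) = 1 := by
        rw [lzpow χ hmul₁ a (a ^ n) m, rzpow χ hmul₂ a a n, haa, one_zpow, one_zpow]
      rw [e1, e2, e3, e4, mul_one, mul_one]
    have hle : H ≤ H' := le_sup_left
    have hcard : Nat.card H = Nat.card H' :=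
      le_antisymm (Subgroup.card_le_of_le hle) (hHmax hiso' (Subgroup.card_le_of_le hle))
    have heq : H = H' := Subgroup.eq_of_le_of_card_ge hle hcard.ge
    rw [heq]
    exact Subgroup.mem_sup_right (Subgroup.mem_zpowers a)
  -- the annihilator subgroup
  set A : Subgroup G := annSub χ hmul₂ H with hA
  have hHA : H ≤ A := fun h hh => fun h' hh' => hHiso h' hh' h hh
  have hcount : Nat.card A * Nat.card H = Nat.card G :=
    card_ann_mul_card χ hmul₁ hmul₂ hherm hnd H
  -- the quadratic character on A
  let qA : A →* ℂˣ := MonoidHom.mk' (fun a => χ (a : G) (a : G)) (by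
    intro a b
    show χ ((a : G) * (b : G)) ((a : G) * (b : G)) = χ (a : G) (a : G) * χ (b : G) (b : G)
    have h1 : χ ((a : G) * b) ((a : G) * b)
        = χ (a : G) (a : G) * χ (a : G) (b : G) * (χ (b : G) (a : G) * χ (b : G) (b : G)) := by
      rw [hmul₁, hmul₂, hmul₂]
    have h2 : χ (a : G) (b : G) * χ (b : G) (a : G) = 1 := skew_mul χ hmul₂ hherm _ _
    rw [h1, mul_assoc, ← mul_assoc (χ (a : G) (b : G)), h2, one_mul])
  -- kernel of qA is H
  have hkerH : Nat.card qA.ker = Nat.card H := by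
    refine Nat.card_eq_of_bijective
      (fun x => (⟨((x.1 : A) : G), hmax _ (x.1 : A).2 x.2⟩ : H)) ⟨?_, ?_⟩
    · intro x y hxy
      apply Subtype.ext
      apply Subtype.ext
      exact congrArg (fun h : H => (h : G)) hxy
    · intro h
      exact ⟨⟨⟨(h : G), hHA h.2⟩, hHiso (h : G) h.2 (h : G) h.2⟩, rfl⟩
  -- the range of qA has 1 or 2 elements
  haveI hfinr : Finite qA.range := by
    have : (qA.range : Set ℂˣ).Finite := by
      rw [MonoidHom.coe_range]
      exact Set.finite_range qA
    exact this.to_subtype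
  have hrange_le : Nat.card qA.range ≤ 2 := by
    have hsub : (qA.range : Set ℂˣ) ⊆ {1, -1} := by
      rintro x ⟨a, rfl⟩
      rcases diag_cases χ hmul₂ hherm (a : G) with h | h
      · left; exact Units.ext h
      · right; exact Units.ext h
    have h1 : Nat.card qA.range = (qA.range : Set ℂˣ).ncard := Nat.card_coe_set_eq _
    rw [h1]
    calc (qA.range : Set ℂˣ).ncard ≤ ({1, -1} : Set ℂˣ).ncard :=
          Set.ncard_le_ncard hsub (Set.toFinite _)
      _ ≤ 2 := by
          refine (Set.ncard_insert_le _ _).trans ?_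
          simp [Set.ncard_singleton]
  have hrange_pos : 0 < Nat.card qA.range := Nat.card_pos
  -- |A| = t * |H|
  have hAcard : Nat.card A = Nat.card qA.range * Nat.card H := by
    rw [← hkerH, Subgroup.card_eq_card_quotient_mul_card_subgroup qA.ker]
    congr 1
    exact Nat.card_congr (QuotientGroup.quotientKerEquivRange qA).toEquiv
  have hG : Nat.card G = Nat.card qA.range * Nat.card H ^ 2 := by
    rw [← hcount, hAcard]; ring
  have hdiag_mem : ∀ g ∈ H, (χ g g : ℂ) = 1 := fun g hg => by
    rw [hHiso g hg g hg, Units.val_one]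
  have ht : Nat.card qA.range = 1 ∨ Nat.card qA.range = 2 := by omega
  have hD : (∃ H : Subgroup G, (H : Set G) = annihilator χ (H : Set G) ∧
        Nat.card G = Nat.card H ^ 2) ∨
      (∃ K : Subgroup G, (K : Set G) ⊆ {g : G | (χ g g : ℂ) = 1} ∧
        (K : Set G) = annihilator χ (K : Set G) ∩ {g : G | (χ g g : ℂ) = 1} ∧
        Nat.card G = 2 * Nat.card K ^ 2) := by
    rcases ht with ht | ht
    · left
      refine ⟨H, ?_, by rw [hG, ht, one_mul]⟩
      have hHAeq : H = A := Subgroup.eq_of_le_of_card_ge hHA (by rw [hAcard, ht, one_mul])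
      exact congrArg (fun B : Subgroup G => (B : Set G)) hHAeq
    · right
      refine ⟨H, hdiag_mem, ?_, by rw [hG, ht]⟩
      ext g
      constructor
      · intro hg
        exact ⟨hHA hg, hdiag_mem g hg⟩
      · rintro ⟨hann, hdg⟩
        exact hmax g hann (Units.ext (by rw [Units.val_one]; exact hdg))
  refine ⟨hD, ?_⟩
  rcases hD with ⟨H', _, hc⟩ | ⟨K', _, _, hc⟩
  · exact ⟨Nat.card H', Or.inl hc⟩
  · exact ⟨Nat.card K', Or.inr hc⟩
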